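/- There exist two-outcome qubit observables with B0 = B1 = (Z + X)/√2 that are jointly measurable (arise as marginals of a single POVM) and achieve equality (1/2)[Tr(X·B1) + Tr(Z·B0)] = √2, so the joint-measurability bound √2 is tight. -/

import Mathlib

open Matrix ComplexOrder

noncomputable def cc : ℂ := ((Real.sqrt 2 : ℝ) : ℂ)⁻¹

lemma cc_sq : cc * cc = 1/2 := by
  unfold cc
  rw [← mul_inv]
  norm_cast
  rw [Real.mul_self_sqrt (by norm_num)]
  norm_num

lemma cc_conj : (starRingEnd ℂ) cc = cc := by
  unfold cc
  simp

noncomputable def Mp : Matrix (Fin 2) (Fin 2) ℂ := !![(1+cc)/2, cc/2; cc/2, (1-cc)/2]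
noncomputable def Mm : Matrix (Fin 2) (Fin 2) ℂ := !![(1-cc)/2, -cc/2; -cc/2, (1+cc)/2]

lemma Mp_psd : Mp.PosSemidef := by
  have h : Mp = Mp * Mpᴴ := by
    ext i j
    fin_cases i <;> fin_cases j <;>
      simp [Mp, Matrix.mul_apply, Matrix.conjTranspose_apply, Fin.sum_univ_two, cc_conj,
        map_ofNat] <;>
      (first
        | ring1
        | linear_combination (-1/2 : ℂ) * cc_sq)
  rw [h]
  exact Matrix.posSemidef_self_mul_conjTranspose Mp

lemma Mm_psd : Mm.PosSemidef := by
  have h : Mm = Mm * Mmᴴ := by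
    ext i j
    fin_cases i <;> fin_cases j <;>
      simp [Mm, Matrix.mul_apply, Matrix.conjTranspose_apply, Fin.sum_univ_two, cc_conj,
        map_ofNat] <;>
      (first
        | ring1
        | linear_combination (-1/2 : ℂ) * cc_sq)
  rw [h]
  exact Matrix.posSemidef_self_mul_conjTranspose Mm

theorem stmt4 :
    ∃ N : Fin 2 → Fin 2 → Matrix (Fin 2) (Fin 2) ℂ,
      (∀ i j, (N i j).PosSemidef) ∧
      N 0 0 + N 0 1 + N 1 0 + N 1 1 = 1 ∧
      N 0 0 + N 0 1 - N 1 0 - N 1 1 =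
        ((Real.sqrt 2 : ℂ))⁻¹ •
          ((!![1, 0; 0, -1] : Matrix (Fin 2) (Fin 2) ℂ) + !![0, 1; 1, 0]) ∧
      N 0 0 - N 0 1 + N 1 0 - N 1 1 =
        ((Real.sqrt 2 : ℂ))⁻¹ •
          ((!![1, 0; 0, -1] : Matrix (Fin 2) (Fin 2) ℂ) + !![0, 1; 1, 0]) ∧
      (1 / 2 : ℝ) *
        (((!![0, 1; 1, 0] : Matrix (Fin 2) (Fin 2) ℂ) *
            (N 0 0 - N 0 1 + N 1 0 - N 1 1)).trace +
         ((!![1, 0; 0, -1] : Matrix (Fin 2) (Fin 2) ℂ) *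
            (N 0 0 + N 0 1 - N 1 0 - N 1 1)).trace).re
        = Real.sqrt 2 := by
  refine ⟨![![Mp, 0], ![0, Mm]], ?_, ?_, ?_, ?_, ?_⟩
  · intro i j
    fin_cases i <;> fin_cases j <;> simp [Mp_psd, Mm_psd, Matrix.PosSemidef.zero]
  · ext i j
    fin_cases i <;> fin_cases j <;> simp [Mp, Mm, Matrix.one_apply] <;> ring
  · ext i j
    fin_cases i <;> fin_cases j <;>
      simp [Mp, Mm, cc, Matrix.smul_apply] <;> ring
  · ext i j
    fin_cases i <;> fin_cases j <;>
      simp [Mp, Mm, cc, Matrix.smul_apply] <;> ring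
  · have h2 : (0:ℝ) < Real.sqrt 2 := Real.sqrt_pos.mpr (by norm_num)
    have key : ((4:ℂ) * cc).re = 4 / Real.sqrt 2 := by
      unfold cc
      simp [div_eq_mul_inv]
      field_simp
      exact Real.sq_sqrt (by norm_num)
    have tr : (((!![0, 1; 1, 0] : Matrix (Fin 2) (Fin 2) ℂ) * !![cc, cc; cc, -cc]).trace +
        ((!![1, 0; 0, -1] : Matrix (Fin 2) (Fin 2) ℂ) * !![cc, cc; cc, -cc]).trace) = 4 * cc := by
      simp [Matrix.trace, Matrix.mul_apply, Fin.sum_univ_two, Matrix.diag]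
      ring
    have hm : (![![Mp, (0:Matrix (Fin 2) (Fin 2) ℂ)], ![0, Mm]] 0 0 : Matrix (Fin 2) (Fin 2) ℂ)
        - ![![Mp, 0], ![0, Mm]] 0 1 + ![![Mp, 0], ![0, Mm]] 1 0 - ![![Mp, 0], ![0, Mm]] 1 1
        = !![cc, cc; cc, -cc] := by
      ext i j
      fin_cases i <;> fin_cases j <;> simp [Mp, Mm] <;> ring
    have hm' : (![![Mp, (0:Matrix (Fin 2) (Fin 2) ℂ)], ![0, Mm]] 0 0 : Matrix (Fin 2) (Fin 2) ℂ)
        + ![![Mp, 0], ![0, Mm]] 0 1 - ![![Mp, 0], ![0, Mm]] 1 0 - ![![Mp, 0], ![0, Mm]] 1 1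
        = !![cc, cc; cc, -cc] := by
      ext i j
      fin_cases i <;> fin_cases j <;> simp [Mp, Mm] <;> ring
    rw [hm, hm', tr, key]
    have h4 : Real.sqrt 2 * Real.sqrt 2 = 2 := Real.mul_self_sqrt (by norm_num)
    field_simp
    nlinarith [h4, h2]
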